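/- Let X, Y, Z be compact metrizable spaces and f : X → Y continuous, and suppose that there are uncountably many y ∈ Y such that f⁻¹{y} contains a homeomorphic copy of Z. Then there exist a perfect subset Q of Y (i.e., Q is nonempty, closed in Y, and has no isolated points) and an injective continuous map i : Q × Z → X such that f(i(q,u)) = q for all (q,u) ∈ Q × Z. -/

import Mathlib

open Set Topology

universe u

section Defs

variable {X Y K Z : Type*}

/-- A subset `S` of a topological space is *scattered* iff every nonempty subset `T ⊆ S`
has a point which is isolated in the subspace topology of `T`. -/
def IsScatteredSet [TopologicalSpace X] (S : Set X) : Prop :=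
  ∀ T ⊆ S, T.Nonempty → ∃ x ∈ T, ∃ U : Set X, IsOpen U ∧ U ∩ T = {x}

/-- A *loose family* for `f : X → Y` : a pairwise disjoint family `Ps` of closed subsets of `X`
such that for some non-scattered `Q ⊆ Y`, `f '' P = Q` for all `P ∈ Ps`. -/
def LooseFamily [TopologicalSpace X] [TopologicalSpace Y] (f : X → Y)
    (Ps : Set (Set X)) : Prop :=
  Ps.Pairwise Disjoint ∧ (∀ P ∈ Ps, IsClosed P) ∧
    ∃ Q : Set Y, ¬ IsScatteredSet Q ∧ ∀ P ∈ Ps, f '' P = Q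

/-- `f` is `κ`-*tight* iff there is no loose family for `f` of cardinality `κ`. -/
def IsTightCard [TopologicalSpace X] [TopologicalSpace Y] (κ : Cardinal) (f : X → Y) : Prop :=
  ¬ ∃ Ps : Set (Set X), LooseFamily f Ps ∧ Cardinal.mk Ps = κ

/-- `f` is *tight* iff it is `2`-tight. -/
def IsTight [TopologicalSpace X] [TopologicalSpace Y] (f : X → Y) : Prop :=
  IsTightCard 2 f

/-- A `K`-*loose function* for `f : X → Y` : a continuous `φ : D → K` with `D` closed in `X`,
such that for some non-scattered `Q ⊆ Y`, `φ(f⁻¹{y} ∩ D) = K` for all `y ∈ Q`. -/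
def LooseFunction [TopologicalSpace X] [TopologicalSpace Y] [TopologicalSpace K]
    (f : X → Y) (D : Set X) (φ : X → K) : Prop :=
  IsClosed D ∧ ContinuousOn φ D ∧
    ∃ Q : Set Y, ¬ IsScatteredSet Q ∧ ∀ y ∈ Q, φ '' (f ⁻¹' {y} ∩ D) = Set.univ

/-- `f` is *weakly c-tight* iff there is no `K`-loose function for `f`
with `K` the Cantor space `2^ω`. -/
def WeaklyCTight [TopologicalSpace X] [TopologicalSpace Y] (f : X → Y) : Prop :=
  ¬ ∃ (D : Set X) (φ : X → (ℕ → Bool)), LooseFunction f D φ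

/-- `f` is *finer* than `g` iff `f x₁ = f x₂` implies `g x₁ = g x₂`. -/
def Finer (f : X → Y) (g : X → Z) : Prop :=
  ∀ x₁ x₂ : X, f x₁ = f x₂ → g x₁ = g x₂

end Defs

/-- `X` is `κ`-*dissipated* iff every continuous map from `X` to a compact metrizable
space is refined by a `κ`-tight continuous map from `X` to a compact metrizable space. -/
def IsDissipatedCard (κ : Cardinal.{u}) (X : Type u) [TopologicalSpace X] : Prop :=
  ∀ (Z : Type u) [TopologicalSpace Z] [CompactSpace Z] [TopologicalSpace.MetrizableSpace Z],
    ∀ g : X → Z, Continuous g →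
      ∃ (Y : Type u) (tY : TopologicalSpace Y),
        @CompactSpace Y tY ∧ @TopologicalSpace.MetrizableSpace Y tY ∧
        ∃ f : X → Y, @Continuous X Y _ tY f ∧ @IsTightCard X Y _ tY κ f ∧ Finer f g

/-- `X` is *weakly c-dissipated* iff every continuous map from `X` to a compact metrizable
space is refined by a weakly c-tight continuous map from `X` to a compact metrizable space. -/
def IsWeaklyCDissipated (X : Type u) [TopologicalSpace X] : Prop :=
  ∀ (Z : Type u) [TopologicalSpace Z] [CompactSpace Z] [TopologicalSpace.MetrizableSpace Z],
    ∀ g : X → Z, Continuous g →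
      ∃ (Y : Type u) (tY : TopologicalSpace Y),
        @CompactSpace Y tY ∧ @TopologicalSpace.MetrizableSpace Y tY ∧
        ∃ f : X → Y, @Continuous X Y _ tY f ∧ @WeaklyCTight X Y _ tY f ∧ Finer f g

section AuxNS
open scoped ENNReal

section Aux
variable {α W : Type*}

lemma aux_exists_pair [TopologicalSpace α] [SecondCountableTopology α]
    [TopologicalSpace W]
    (π : α → W) {R : Set α} (hR : ¬ (π '' R).Countable) :
    ∃ p₀ ∈ R, ∃ p₁ ∈ R, π p₀ ≠ π p₁ ∧
      (∀ U : Set α, IsOpen U → p₀ ∈ U → ¬ (π '' (U ∩ R)).Countable) ∧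
      (∀ U : Set α, IsOpen U → p₁ ∈ U → ¬ (π '' (U ∩ R)).Countable) := by
  obtain ⟨B, hBc, -, hB⟩ := TopologicalSpace.exists_countable_basis α
  set ω : Set α := ⋃₀ {U ∈ B | (π '' (U ∩ R)).Countable} with hω
  have hWc : (π '' (ω ∩ R)).Countable := by
    have hsub : π '' (ω ∩ R) ⊆ ⋃ U ∈ {U ∈ B | (π '' (U ∩ R)).Countable}, π '' (U ∩ R) := by
      rintro y ⟨p, ⟨⟨U, hU, hpU⟩, hpR⟩, rfl⟩
      exact mem_biUnion hU ⟨p, ⟨hpU, hpR⟩, rfl⟩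
    exact Set.Countable.mono hsub <| Set.Countable.biUnion
      (hBc.mono (sep_subset _ _)) fun U hU => hU.2
  have hRW : ¬ (π '' (R \ ω)).Countable := by
    intro hc
    apply hR
    have hsub : π '' R ⊆ π '' (ω ∩ R) ∪ π '' (R \ ω) := by
      rintro y ⟨p, hp, rfl⟩
      by_cases hpω : p ∈ ω
      · exact Or.inl ⟨p, ⟨hpω, hp⟩, rfl⟩
      · exact Or.inr ⟨p, ⟨hp, hpω⟩, rfl⟩
    exact (hWc.union hc).mono hsub
  have hnt : (π '' (R \ ω)).Nontrivial := by
    by_contra hs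
    exact hRW (Set.not_nontrivial_iff.mp hs).countable
  obtain ⟨y₀, hy₀, y₁, hy₁, hne⟩ := hnt
  obtain ⟨p₀, hp₀, rfl⟩ := hy₀
  obtain ⟨p₁, hp₁, rfl⟩ := hy₁
  have key : ∀ p : α, p ∈ R \ ω → ∀ U : Set α, IsOpen U → p ∈ U →
      ¬ (π '' (U ∩ R)).Countable := by
    rintro p ⟨hpR, hpω⟩ U hU hpU hc
    obtain ⟨V, hVB, hpV, hVU⟩ := hB.exists_subset_of_mem_open hpU hU
    exact hpω ⟨V, ⟨hVB, hc.mono (image_mono (inter_subset_inter_left _ hVU))⟩, hpV⟩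
  exact ⟨p₀, hp₀.1, p₁, hp₁.1, hne, key p₀ hp₀, key p₁ hp₁⟩

lemma aux_split [MetricSpace α] [SecondCountableTopology α] [MetricSpace W]
    (π : α → W) (hπ : Continuous π) {R : Set α} (hR : ¬ (π '' R).Countable)
    {ε : ℝ≥0∞} (hε : 0 < ε) :
    ∃ R₀ R₁ : Set α, R₀ ⊆ R ∧ R₁ ⊆ R ∧ ¬ (π '' R₀).Countable ∧ ¬ (π '' R₁).Countable ∧
      EMetric.diam (closure R₀) ≤ ε ∧ EMetric.diam (closure R₁) ≤ ε ∧
      Disjoint (π '' closure R₀) (π '' closure R₁) := by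
  obtain ⟨p₀, hp₀, p₁, hp₁, hne, h₀, h₁⟩ := aux_exists_pair π hR
  set r : ℝ := dist (π p₀) (π p₁) / 3 with hr
  have hdpos : 0 < dist (π p₀) (π p₁) := dist_pos.mpr hne
  have hrpos : 0 < r := by positivity
  have mk : ∀ p : α, (∀ U, IsOpen U → p ∈ U → ¬ (π '' (U ∩ R)).Countable) →
      ((EMetric.ball p (ε / 2) ∩ π ⁻¹' Metric.ball (π p) r) ∩ R ⊆ R) ∧
      ¬ (π '' ((EMetric.ball p (ε / 2) ∩ π ⁻¹' Metric.ball (π p) r) ∩ R)).Countable ∧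
      EMetric.diam (closure ((EMetric.ball p (ε / 2) ∩ π ⁻¹' Metric.ball (π p) r) ∩ R)) ≤ ε ∧
      π '' closure ((EMetric.ball p (ε / 2) ∩ π ⁻¹' Metric.ball (π p) r) ∩ R) ⊆
        Metric.closedBall (π p) r := by
    intro p hp
    have hεpos : (0 : ℝ≥0∞) < ε / 2 := by
      rw [ENNReal.div_pos_iff]
      exact ⟨ne_of_gt hε, by norm_num⟩
    have hVopen : IsOpen (EMetric.ball p (ε / 2) ∩ π ⁻¹' Metric.ball (π p) r) :=
      EMetric.isOpen_ball.inter (Metric.isOpen_ball.preimage hπ)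
    have hpV : p ∈ EMetric.ball p (ε / 2) ∩ π ⁻¹' Metric.ball (π p) r :=
      ⟨EMetric.mem_ball_self hεpos, Metric.mem_ball_self hrpos⟩
    refine ⟨inter_subset_right, hp _ hVopen hpV, ?_, ?_⟩
    · refine le_trans (EMetric.diam_closure _).le ?_
      apply le_trans (EMetric.diam_mono (inter_subset_left.trans inter_subset_left))
      refine le_trans EMetric.diam_ball (le_of_eq ?_)
      rw [mul_comm, ENNReal.div_mul_cancel] <;> norm_num
    · rw [image_subset_iff]
      apply closure_minimal _ ((Metric.isClosed_closedBall).preimage hπ)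
      intro q hq
      exact Metric.ball_subset_closedBall hq.1.2
  obtain ⟨hs₀, hu₀, hd₀, hb₀⟩ := mk p₀ h₀
  obtain ⟨hs₁, hu₁, hd₁, hb₁⟩ := mk p₁ h₁
  refine ⟨_, _, hs₀, hs₁, hu₀, hu₁, hd₀, hd₁, ?_⟩
  refine Disjoint.mono hb₀ hb₁ (Metric.closedBall_disjoint_closedBall ?_)
  rw [hr]; linarith

lemma aux_step [MetricSpace α] [SecondCountableTopology α] [MetricSpace W]
    (π : α → W) (hπ : Continuous π) {R : Set α} {F : ℕ → Set α}
    (hRF : R ⊆ ⋃ m, F m) (hFc : ∀ m, IsClosed (F m))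
    (hR : ¬ (π '' R).Countable) {ε : ℝ≥0∞} (hε : 0 < ε) :
    ∃ R₀ R₁ : Set α, R₀ ⊆ R ∧ R₁ ⊆ R ∧ ¬ (π '' R₀).Countable ∧ ¬ (π '' R₁).Countable ∧
      EMetric.diam (closure R₀) ≤ ε ∧ EMetric.diam (closure R₁) ≤ ε ∧
      Disjoint (π '' closure R₀) (π '' closure R₁) ∧
      ∃ m, closure R₀ ⊆ F m ∧ closure R₁ ⊆ F m := by
  have hex : ∃ m, ¬ (π '' (R ∩ F m)).Countable := by
    by_contra hc
    push_neg at hc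
    apply hR
    have hsub : π '' R ⊆ ⋃ m, π '' (R ∩ F m) := by
      rintro y ⟨p, hp, rfl⟩
      obtain ⟨m, hm⟩ := mem_iUnion.mp (hRF hp)
      exact mem_iUnion.mpr ⟨m, ⟨p, ⟨hp, hm⟩, rfl⟩⟩
    exact (Set.countable_iUnion hc).mono hsub
  obtain ⟨m, hm⟩ := hex
  obtain ⟨R₀, R₁, h₀s, h₁s, h₀u, h₁u, h₀d, h₁d, hdisj⟩ := aux_split π hπ hm hε
  exact ⟨R₀, R₁, h₀s.trans inter_subset_left, h₁s.trans inter_subset_left, h₀u, h₁u,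
    h₀d, h₁d, hdisj, m, closure_minimal (h₀s.trans inter_subset_right) (hFc m),
    closure_minimal (h₁s.trans inter_subset_right) (hFc m)⟩

open CantorScheme in
lemma aux_cantor [MetricSpace α] [CompleteSpace α] [SecondCountableTopology α]
    [MetricSpace W] (π : α → W) (hπ : Continuous π)
    (F : ℕ → ℕ → Set α) (hFc : ∀ n m, IsClosed (F n m))
    (S : Set α) (hSF : ∀ n, S ⊆ ⋃ m, F n m) (hS : ¬ (π '' S).Countable) :
    ∃ g : (ℕ → Bool) → α, Continuous g ∧ Function.Injective (π ∘ g) ∧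
      ∀ x : ℕ → Bool, g x ∈ closure S ∧ ∀ n : ℕ, ∃ m : ℕ, g x ∈ F n m := by
  obtain ⟨u, -, upos', hu⟩ := exists_seq_strictAnti_tendsto' (zero_lt_one' ℝ≥0∞)
  have upos : ∀ n, 0 < u n := fun n => (upos' n).1
  choose R0 R1 hsub0 hsub1 hunc0 hunc1 hdiam0 hdiam1 hdisj mF hF0 hF1 using
    fun (n : ℕ) (R : Set α) (h1 : R ⊆ S) (h2 : ¬ (π '' R).Countable) =>
      aux_step π hπ (h1.trans (hSF n)) (hFc n) h2 (upos (n + 1))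
  let P := { R : Set α // R ⊆ S ∧ ¬ (π '' R).Countable }
  let child : (l : List Bool) → P → Bool → P := fun l ih a =>
    match a with
    | false => ⟨R0 l.length ih.1 ih.2.1 ih.2.2,
        (hsub0 l.length ih.1 ih.2.1 ih.2.2).trans ih.2.1, hunc0 l.length ih.1 ih.2.1 ih.2.2⟩
    | true => ⟨R1 l.length ih.1 ih.2.1 ih.2.2,
        (hsub1 l.length ih.1 ih.2.1 ih.2.2).trans ih.2.1, hunc1 l.length ih.1 ih.2.1 ih.2.2⟩
  let DP : List Bool → P := fun l =>
    List.rec ⟨S, subset_rfl, hS⟩ (fun a l ih => child l ih a) l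
  have hDPcons : ∀ (l : List Bool) (a : Bool), DP (a :: l) = child l (DP l) a := fun _ _ => rfl
  let A : List Bool → Set α := fun l => closure (DP l).1
  have hDPsub : ∀ (l : List Bool) (a : Bool), (DP (a :: l)).1 ⊆ (DP l).1 := by
    intro l a
    cases a
    · exact hsub0 l.length (DP l).1 (DP l).2.1 (DP l).2.2
    · exact hsub1 l.length (DP l).1 (DP l).2.1 (DP l).2.2
  have hnonempty : ∀ l, (A l).Nonempty := by
    intro l
    rw [closure_nonempty_iff]
    rcases (DP l).1.eq_empty_or_nonempty with h | h
    · exact absurd (by rw [h, image_empty]; exact countable_empty) (DP l).2.2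
    · exact h
  have hanti : CantorScheme.ClosureAntitone A := by
    intro l a
    have : A (a :: l) ⊆ A l := closure_mono (hDPsub l a)
    rwa [IsClosed.closure_subset_iff isClosed_closure]
  have hdiamA : ∀ (l : List Bool) (a : Bool), EMetric.diam (A (a :: l)) ≤ u (l.length + 1) := by
    intro l a
    cases a
    · exact hdiam0 l.length (DP l).1 (DP l).2.1 (DP l).2.2
    · exact hdiam1 l.length (DP l).1 (DP l).2.1 (DP l).2.2
  have hdiam : CantorScheme.VanishingDiam A := by
    intro x
    apply tendsto_of_tendsto_of_tendsto_of_le_of_le' tendsto_const_nhds hu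
    · simp
    rw [Filter.eventually_atTop]
    refine ⟨1, fun m (hm : 1 ≤ m) => ?_⟩
    rw [Nat.one_le_iff_ne_zero] at hm
    rcases Nat.exists_eq_succ_of_ne_zero hm with ⟨n, rfl⟩
    rw [PiNat.res_succ]
    have := hdiamA (PiNat.res x n) (x n)
    rwa [PiNat.res_length] at this
  have hdisjA : ∀ (l : List Bool) (a b : Bool), a ≠ b →
      Disjoint (π '' A (a :: l)) (π '' A (b :: l)) := by
    intro l a b hab
    cases a <;> cases b <;> try simp at hab
    · exact hdisj l.length (DP l).1 (DP l).2.1 (DP l).2.2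
    · exact (hdisj l.length (DP l).1 (DP l).2.1 (DP l).2.2).symm
  have hdom : (inducedMap A).1 = univ :=
    hanti.map_of_vanishingDiam hdiam fun l => hnonempty l
  have hdom' : ∀ x : ℕ → Bool, x ∈ (inducedMap A).1 := by rw [hdom]; exact fun x => mem_univ x
  refine ⟨fun x => (inducedMap A).2 ⟨x, hdom' x⟩, ?_, ?_, ?_⟩
  · exact hdiam.map_continuous.comp (Continuous.subtype_mk continuous_id _)
  · intro x y hxy
    by_contra hne
    have hex : ∃ n, x n ≠ y n := by
      by_contra h; push_neg at h; exact hne (funext h)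
    set n := Nat.find hex with hn
    have hres : PiNat.res x n = PiNat.res y n :=
      PiNat.res_eq_res.mpr fun m hm => not_not.mp (Nat.find_min hex hm)
    have h1 : π ((inducedMap A).2 ⟨x, hdom' x⟩) ∈ π '' A (x n :: PiNat.res x n) := by
      refine mem_image_of_mem π ?_
      have := CantorScheme.map_mem ⟨x, hdom' x⟩ (n + 1)
      rwa [PiNat.res_succ] at this
    have h2 : π ((inducedMap A).2 ⟨y, hdom' y⟩) ∈ π '' A (y n :: PiNat.res x n) := by
      refine mem_image_of_mem π ?_
      have := CantorScheme.map_mem ⟨y, hdom' y⟩ (n + 1)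
      rw [PiNat.res_succ, ← hres] at this
      exact this
    have hd := hdisjA (PiNat.res x n) (x n) (y n) (Nat.find_spec hex)
    have hxy' : π ((inducedMap A).2 ⟨x, hdom' x⟩) = π ((inducedMap A).2 ⟨y, hdom' y⟩) := hxy
    exact Set.disjoint_left.mp hd h1 (hxy' ▸ h2)
  · intro x
    constructor
    · have := CantorScheme.map_mem ⟨x, hdom' x⟩ 0
      rwa [PiNat.res_zero] at this
    · intro n
      have hFsub : ∀ (l : List Bool) (a : Bool), ∃ m, A (a :: l) ⊆ F l.length m := by
        intro l a
        cases a
        · exact ⟨mF l.length (DP l).1 (DP l).2.1 (DP l).2.2,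
            hF0 l.length (DP l).1 (DP l).2.1 (DP l).2.2⟩
        · exact ⟨mF l.length (DP l).1 (DP l).2.1 (DP l).2.2,
            hF1 l.length (DP l).1 (DP l).2.1 (DP l).2.2⟩
      obtain ⟨m, hm⟩ := hFsub (PiNat.res x n) (x n)
      rw [PiNat.res_length] at hm
      refine ⟨m, hm ?_⟩
      have := CantorScheme.map_mem ⟨x, hdom' x⟩ (n + 1)
      rwa [PiNat.res_succ] at this
end Aux
end AuxNS

/-- If `X, Y, Z` are compact metrizable, `f : X → Y` is continuous, and uncountably many
fibers `f⁻¹{y}` contain a homeomorphic copy of `Z`, then there is a perfect `Q ⊆ Y` and a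
continuous injection `i : Q × Z → X` with `f (i (q, u)) = q` for all `(q, u)`. -/
theorem stmt3 {X Y Z : Type*}
    [TopologicalSpace X] [CompactSpace X] [TopologicalSpace.MetrizableSpace X]
    [TopologicalSpace Y] [CompactSpace Y] [TopologicalSpace.MetrizableSpace Y]
    [TopologicalSpace Z] [CompactSpace Z] [TopologicalSpace.MetrizableSpace Z]
    (f : X → Y) (hf : Continuous f)
    (h : ¬ {y : Y | ∃ e : Z → X, Continuous e ∧ Function.Injective e ∧
        Set.range e ⊆ f ⁻¹' {y}}.Countable) :
    ∃ Q : Set Y, Perfect Q ∧ Q.Nonempty ∧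
      ∃ i : Q × Z → X, Continuous i ∧ Function.Injective i ∧
        ∀ p : Q × Z, f (i p) = (p.1 : Y) := by
  letI := TopologicalSpace.metrizableSpaceMetric X
  letI := TopologicalSpace.metrizableSpaceMetric Y
  letI := TopologicalSpace.metrizableSpaceMetric Z
  set S : Set (Y × C(Z, X)) :=
    {p | (∀ z, f (p.2 z) = p.1) ∧ Function.Injective p.2} with hSdef
  set F : ℕ → ℕ → Set (Y × C(Z, X)) := fun n m =>
    {p | ∀ z z' : Z, 1 / (n + 1 : ℝ) ≤ dist z z' → 1 / (m + 1 : ℝ) ≤ dist (p.2 z) (p.2 z')}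
    with hFdef
  have hFc : ∀ n m, IsClosed (F n m) := by
    intro n m
    have heq : F n m = ⋂ (z : Z) (z' : Z), {p : Y × C(Z, X) |
        1 / (n + 1 : ℝ) ≤ dist z z' → 1 / (m + 1 : ℝ) ≤ dist (p.2 z) (p.2 z')} := by
      rw [hFdef]
      ext p
      simp only [mem_setOf_eq, mem_iInter]
    rw [heq]
    refine isClosed_iInter fun z => isClosed_iInter fun z' => ?_
    by_cases hzz : 1 / (n + 1 : ℝ) ≤ dist z z'
    · have : {p : Y × C(Z, X) |
          1 / (n + 1 : ℝ) ≤ dist z z' → 1 / (m + 1 : ℝ) ≤ dist (p.2 z) (p.2 z')} =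
          {p : Y × C(Z, X) | 1 / (m + 1 : ℝ) ≤ dist (p.2 z) (p.2 z')} := by
        ext p
        simp only [mem_setOf_eq]
        exact ⟨fun hh => hh hzz, fun hh _ => hh⟩
      rw [this]
      exact isClosed_le continuous_const
        (((continuous_eval_const z).comp continuous_snd).dist
          ((continuous_eval_const z').comp continuous_snd))
    · have : {p : Y × C(Z, X) |
          1 / (n + 1 : ℝ) ≤ dist z z' → 1 / (m + 1 : ℝ) ≤ dist (p.2 z) (p.2 z')} = univ := by
        ext p
        simp only [mem_setOf_eq, mem_univ, iff_true]
        exact fun hh => absurd hh hzz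
      rw [this]
      exact isClosed_univ
  have hfibclosed : IsClosed {p : Y × C(Z, X) | ∀ z, f (p.2 z) = p.1} := by
    have heq : {p : Y × C(Z, X) | ∀ z, f (p.2 z) = p.1} =
        ⋂ z : Z, {p : Y × C(Z, X) | f (p.2 z) = p.1} := by ext p; simp
    rw [heq]
    exact isClosed_iInter fun z => isClosed_eq
      (hf.comp ((continuous_eval_const z).comp continuous_snd)) continuous_fst
  have hSF : ∀ n, S ⊆ ⋃ m, F n m := by
    intro n p hp
    set K : Set (Z × Z) := {q | 1 / (n + 1 : ℝ) ≤ dist q.1 q.2} with hKdef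
    have hKc : IsCompact K :=
      (isClosed_le continuous_const (continuous_fst.dist continuous_snd)).isCompact
    rcases K.eq_empty_or_nonempty with hKe | hKne
    · refine mem_iUnion.mpr ⟨0, fun z z' hzz' => ?_⟩
      exact absurd (show (z, z') ∈ K from hzz') (by simp [hKe])
    · obtain ⟨q0, hq0K, hq0min⟩ := hKc.exists_isMinOn hKne
        ((((p.2).continuous.comp continuous_fst).dist
          ((p.2).continuous.comp continuous_snd)).continuousOn)
      have hq0ne : q0.1 ≠ q0.2 := by
        intro hcontra
        have h1 : 1 / (n + 1 : ℝ) ≤ dist q0.1 q0.2 := hq0K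
        rw [hcontra, dist_self] at h1
        have : (0 : ℝ) < 1 / (n + 1 : ℝ) := by positivity
        linarith
      have hδ : 0 < dist (p.2 q0.1) (p.2 q0.2) :=
        dist_pos.mpr fun hcontra => hq0ne (hp.2 hcontra)
      obtain ⟨m, hm⟩ := exists_nat_one_div_lt hδ
      refine mem_iUnion.mpr ⟨m, fun z z' hzz' => ?_⟩
      have hle := hq0min (show (z, z') ∈ K from hzz')
      simp only at hle
      calc (1 : ℝ) / (m + 1) ≤ dist (p.2 q0.1) (p.2 q0.2) := hm.le
        _ ≤ dist (p.2 z) (p.2 z') := hle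
  have hSunc : ¬ ((Prod.fst : Y × C(Z, X) → Y) '' S).Countable := by
    intro hc
    apply h
    refine hc.mono ?_
    rintro y ⟨e, he, hinj, hrange⟩
    exact ⟨(y, ⟨e, he⟩), ⟨fun z => hrange (mem_range_self z), hinj⟩, rfl⟩
  obtain ⟨g, hgc, hginj, hg⟩ :=
    aux_cantor (Prod.fst : Y × C(Z, X) → Y) continuous_fst F hFc S hSF hSunc
  have hgfib : ∀ x z, f ((g x).2 z) = (g x).1 := fun x z =>
    (closure_minimal (fun p (hp : p ∈ S) => hp.1) hfibclosed (hg x).1) z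
  have hginj2 : ∀ x, Function.Injective ((g x).2) := by
    intro x z z' hzz'
    by_contra hne
    have hd : 0 < dist z z' := dist_pos.mpr hne
    obtain ⟨n, hn⟩ := exists_nat_one_div_lt hd
    obtain ⟨m, hm⟩ := (hg x).2 n
    have h1 := hm z z' hn.le
    rw [hzz', dist_self] at h1
    have : (0 : ℝ) < 1 / (m + 1 : ℝ) := by positivity
    linarith
  set Q : Set Y := range (fun x : ℕ → Bool => (g x).1) with hQdef
  have hπinj : Function.Injective (fun x : ℕ → Bool => (g x).1) := hginj
  have hQcompact : IsCompact Q := isCompact_range (continuous_fst.comp hgc)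
  let φ : (ℕ → Bool) → Q := fun x => ⟨(g x).1, mem_range_self x⟩
  have hφc : Continuous φ := (continuous_fst.comp hgc).subtype_mk _
  have hφbij : Function.Bijective φ := by
    constructor
    · intro x y hxy
      exact hπinj (congrArg Subtype.val hxy)
    · rintro ⟨y, x, rfl⟩
      exact ⟨x, rfl⟩
  let homeo : (ℕ → Bool) ≃ₜ Q :=
    Continuous.homeoOfEquivCompactToT2 (f := Equiv.ofBijective φ hφbij) hφc
  have hQperf : Perfect Q := by
    constructor
    · exact hQcompact.isClosed
    · intro y hy
      rw [accPt_iff_nhds]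
      intro U hU
      obtain ⟨x, rfl⟩ := hy
      have hconv : Filter.Tendsto (fun k => Function.update x k (!(x k)))
          Filter.atTop (𝓝 x) := by
        rw [tendsto_pi_nhds]
        intro i
        refine Filter.Tendsto.congr' ?_ tendsto_const_nhds
        filter_upwards [Filter.eventually_gt_atTop i] with k hk
        exact (Function.update_of_ne (by omega : i ≠ k) _ x).symm
      have h2 : Filter.Tendsto (fun k => (g (Function.update x k (!(x k)))).1)
          Filter.atTop (𝓝 ((g x).1)) :=
        ((continuous_fst.comp hgc).tendsto x).comp hconv
      have h3 : ∀ᶠ k in Filter.atTop,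
          (g (Function.update x k (!(x k)))).1 ∈ U := h2 hU
      obtain ⟨k, hk⟩ := h3.exists
      refine ⟨(g (Function.update x k (!(x k)))).1, ⟨hk, mem_range_self _⟩, ?_⟩
      intro heq
      have hne : Function.update x k (!(x k)) ≠ x := by
        intro hcontra
        have := congrFun hcontra k
        simp at this
      exact hne (hπinj heq)
  refine ⟨Q, hQperf, ⟨(g (fun _ => false)).1, mem_range_self _⟩, ?_⟩
  have hσ : ∀ q : Q, (g (homeo.symm q)).1 = (q : Y) := by
    intro q
    exact congrArg Subtype.val (homeo.apply_symm_apply q)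
  refine ⟨fun p => (g (homeo.symm p.1)).2 p.2, ?_, ?_, ?_⟩
  · have h1 : Continuous fun p : Q × Z => ((g (homeo.symm p.1)).2, p.2) :=
      (continuous_snd.comp (hgc.comp (homeo.symm.continuous.comp continuous_fst))).prodMk
        continuous_snd
    exact continuous_eval.comp h1
  · intro p p' hpp'
    have hpp2 : (g (homeo.symm p.1)).2 p.2 = (g (homeo.symm p'.1)).2 p'.2 := hpp'
    have hq : p.1 = p'.1 := by
      apply Subtype.ext
      rw [← hσ p.1, ← hσ p'.1, ← hgfib (homeo.symm p.1) p.2,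
        ← hgfib (homeo.symm p'.1) p'.2, hpp2]
    have hz : p.2 = p'.2 := by
      apply hginj2 (homeo.symm p.1)
      rw [hpp2, hq]
    exact Prod.ext hq hz
  · intro p
    show f ((g (homeo.symm p.1)).2 p.2) = (p.1 : Y)
    rw [hgfib (homeo.symm p.1) p.2, hσ p.1]
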